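/- There is an absolute constant c > 0 such that the following holds. Let A ∈ ℝ^{n×n} with largest singular value σ₁(A) > 0, and let u₁ be a unit eigenvector of AAᵀ with eigenvalue σ₁(A)². Let y ∈ ℝⁿ be a unit vector with |⟨y, u₁⟩| ≥ 1/√n. Then for every ε ∈ (0,1) and every integer t ≥ c·log(n/ε)/ε, the vector (AAᵀ)ᵗy is nonzero, and the unit vector z = (AAᵀ)ᵗy / ‖(AAᵀ)ᵗy‖₂ satisfies ‖Aᵀz‖₂ ≥ (1 − ε)·σ₁(A). -/

import Mathlib

open Matrix BigOperators

/-- The spectral (operator) norm of a real square matrix. -/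
noncomputable def specNorm {m : ℕ} (M : Matrix (Fin m) (Fin m) ℝ) : ℝ :=
  ‖LinearMap.toContinuousLinearMap (Matrix.toEuclideanLin M)‖

/-- The `n × n` all-ones matrix. -/
def allOnes (m : ℕ) : Matrix (Fin m) (Fin m) ℝ := Matrix.of fun _ _ => 1

/-- Euclidean norm of a vector in `ℝⁿ`. -/
noncomputable def vnorm {m : ℕ} (x : Fin m → ℝ) : ℝ := Real.sqrt (∑ i, (x i) ^ 2)

/-- The (unsorted) singular values of a real square matrix: square roots of the
eigenvalues of `Aᵀ A`. -/
noncomputable def svRaw {m : ℕ} (A : Matrix (Fin m) (Fin m) ℝ) : Fin m → ℝ :=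
  fun j => Real.sqrt ((show (Aᵀ * A).IsHermitian from
    by
    simpa using Matrix.isHermitian_conjTranspose_mul_self A).eigenvalues j)

/-- `sval A i` is the `i`-th largest singular value of `A` (1-based indexing);
it is `0` for `i = 0` and for `i > m`. -/
noncomputable def sval {m : ℕ} (A : Matrix (Fin m) (Fin m) ℝ) (i : ℕ) : ℝ :=
  if h : 1 ≤ i ∧ i ≤ m then (svRaw A ∘ Tuple.sort (svRaw A)) ⟨m - i, by omega⟩ else 0

/-- The nuclear (Schatten-1) norm of a real square matrix: the sum of its singular values. -/
noncomputable def nuclearNorm {m : ℕ} (A : Matrix (Fin m) (Fin m) ℝ) : ℝ :=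
  ∑ j, svRaw A j

/-- The smallest eigenvalue of a symmetric real matrix, via the Rayleigh quotient. -/
noncomputable def lamMin {m : ℕ} (A : Matrix (Fin m) (Fin m) ℝ) : ℝ :=
  sInf {r : ℝ | ∃ x : Fin m → ℝ, vnorm x = 1 ∧ r = x ⬝ᵥ (A *ᵥ x)}

/-- dot product self as sum of squares -/
lemma dp_self_eq {m : ℕ} (x : Fin m → ℝ) : x ⬝ᵥ x = ∑ i, (x i) ^ 2 := by
  simp [dotProduct, pow_two]

lemma dp_cs {m : ℕ} (v w : Fin m → ℝ) : (v ⬝ᵥ w) ^ 2 ≤ (v ⬝ᵥ v) * (w ⬝ᵥ w) := by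
  have h := Finset.sum_mul_sq_le_sq_mul_sq Finset.univ v w
  simpa only [dotProduct, pow_two] using h

lemma quadform_le {m : ℕ} {M : Matrix (Fin m) (Fin m) ℝ} (hM : M.IsHermitian)
    {b : ℝ} (hb : ∀ i, hM.eigenvalues i ≤ b) (x : Fin m → ℝ) :
    x ⬝ᵥ (M *ᵥ x) ≤ b * (x ⬝ᵥ x) := by
  set U : Matrix (Fin m) (Fin m) ℝ := (hM.eigenvectorUnitary : Matrix (Fin m) (Fin m) ℝ) with hUdef
  have hstar : star U = Uᵀ := by
    rw [Matrix.star_eq_conjTranspose, Matrix.conjTranspose_eq_transpose_of_trivial]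
  have hU1 : U * star U = 1 := (Matrix.mem_unitaryGroup_iff).mp hM.eigenvectorUnitary.2
  set g : Fin m → ℝ := Uᵀ *ᵥ x with hg
  have hvg : x ᵥ* U = g := by rw [hg, Matrix.mulVec_transpose]
  have hMx : x ⬝ᵥ (M *ᵥ x) = ∑ i, hM.eigenvalues i * g i * g i := by
    conv_lhs => rw [hM.spectral_theorem, Unitary.conjStarAlgAut_apply]
    rw [hstar, ← Matrix.mulVec_mulVec, ← Matrix.mulVec_mulVec, Matrix.dotProduct_mulVec, hvg]
    simp [Matrix.mulVec_diagonal, dotProduct, mul_comm, mul_assoc, mul_left_comm, ← hg]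
  have hgg : g ⬝ᵥ g = x ⬝ᵥ x := by
    calc g ⬝ᵥ g = (x ᵥ* U) ⬝ᵥ g := by rw [hvg]
    _ = x ⬝ᵥ (U *ᵥ g) := (Matrix.dotProduct_mulVec x U g).symm
    _ = x ⬝ᵥ ((U * Uᵀ) *ᵥ x) := by rw [hg, Matrix.mulVec_mulVec]
    _ = x ⬝ᵥ x := by rw [← hstar, hU1, Matrix.one_mulVec]
  rw [hMx, ← hgg]
  calc ∑ i, hM.eigenvalues i * g i * g i ≤ ∑ i, b * (g i * g i) := by
        apply Finset.sum_le_sum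
        intro i _
        rw [mul_assoc]
        exact mul_le_mul_of_nonneg_right (hb i) (mul_self_nonneg _)
  _ = b * (g ⬝ᵥ g) := by rw [dotProduct, Finset.mul_sum]

lemma svRaw_le_sval_one {m : ℕ} (A : Matrix (Fin m) (Fin m) ℝ) (hm : 0 < m) (j : Fin m) :
    svRaw A j ≤ sval A 1 := by
  have h : (1 ≤ 1 ∧ 1 ≤ m) := ⟨le_refl 1, hm⟩
  rw [sval, dif_pos h]
  obtain ⟨i, hi⟩ := (Tuple.sort (svRaw A)).surjective j
  have hle : i ≤ (⟨m - 1, by omega⟩ : Fin m) := by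
    have := i.isLt
    exact Fin.mk_le_mk.mpr (by omega) |>.trans_eq rfl
  calc svRaw A j = (svRaw A ∘ Tuple.sort (svRaw A)) i := by simp [hi]
  _ ≤ _ := Tuple.monotone_sort (svRaw A) hle

lemma eig_le_sval_sq {m : ℕ} (A : Matrix (Fin m) (Fin m) ℝ) (hm : 0 < m) (j : Fin m) :
    (show (Aᵀ * A).IsHermitian from by simpa using Matrix.isHermitian_conjTranspose_mul_self A).eigenvalues j ≤ (sval A 1) ^ 2 := by
  have h0 : 0 ≤ (show (Aᵀ * A).IsHermitian from by simpa using Matrix.isHermitian_conjTranspose_mul_self A).eigenvalues j :=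
    Matrix.eigenvalues_conjTranspose_mul_self_nonneg A j
  have h1 : svRaw A j ≤ sval A 1 := svRaw_le_sval_one A hm j
  have h2 : 0 ≤ svRaw A j := Real.sqrt_nonneg _
  have := pow_le_pow_left₀ h2 h1 2
  rwa [svRaw, Real.sq_sqrt h0] at this

/-- **Gap-independent convergence of power iteration.** If the unit vector `y` has inner
product at least `1/√n` in magnitude with a top left singular vector `u₁` of `A`, then
for `t ≥ c log(n/ε)/ε`, the normalized vector `z = (AAᵀ)ᵗy / ‖(AAᵀ)ᵗy‖` satisfies
`‖Aᵀz‖₂ ≥ (1−ε)σ₁(A)`. -/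
theorem power_method_convergence :
    ∃ c : ℝ, 0 < c ∧ ∀ (n : ℕ) (A : Matrix (Fin n) (Fin n) ℝ) (u₁ y : Fin n → ℝ)
      (ε : ℝ) (t : ℕ),
      0 < sval A 1 →
      vnorm u₁ = 1 → (A * Aᵀ) *ᵥ u₁ = ((sval A 1) ^ 2) • u₁ →
      vnorm y = 1 → 1 / Real.sqrt n ≤ |y ⬝ᵥ u₁| →
      ε ∈ Set.Ioo (0 : ℝ) 1 → c * Real.log (n / ε) / ε ≤ t →
      ((A * Aᵀ) ^ t) *ᵥ y ≠ 0 ∧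
      (1 - ε) * sval A 1 ≤
        vnorm (Aᵀ *ᵥ ((vnorm (((A * Aᵀ) ^ t) *ᵥ y))⁻¹ • (((A * Aᵀ) ^ t) *ᵥ y))) := by
  refine ⟨1, one_pos, ?_⟩
  intro n A u₁ y ε t hσ hu₁ hBu hy hyu hε ht
  obtain ⟨hε0, hε1⟩ := hε
  -- n is positive
  have hn : 0 < n := by
    rcases Nat.eq_zero_or_pos n with h | h
    · subst h; simp [sval] at hσ
    · exact h
  set σ : ℝ := sval A 1 with hσdef
  set B : Matrix (Fin n) (Fin n) ℝ := A * Aᵀ with hBdef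
  -- symmetry of B
  have hBT : Bᵀ = B := by
    rw [hBdef, Matrix.transpose_mul, Matrix.transpose_transpose]
  have hsym : ∀ v w : Fin n → ℝ, v ⬝ᵥ (B *ᵥ w) = (B *ᵥ v) ⬝ᵥ w := by
    intro v w
    rw [Matrix.dotProduct_mulVec]
    nth_rewrite 1 [← hBT]
    rw [Matrix.vecMul_transpose]
  -- quadratic form bound for AᵀA
  have hAquad : ∀ x : Fin n → ℝ, (A *ᵥ x) ⬝ᵥ (A *ᵥ x) ≤ σ ^ 2 * (x ⬝ᵥ x) := by
    intro x
    have h := quadform_le (show (Aᵀ * A).IsHermitian from by simpa using Matrix.isHermitian_conjTranspose_mul_self A)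
      (fun i => eig_le_sval_sq A hn i) x
    have heq : x ⬝ᵥ ((Aᴴ * A) *ᵥ x) = (A *ᵥ x) ⬝ᵥ (A *ᵥ x) := by
      rw [← Matrix.mulVec_mulVec, Matrix.dotProduct_mulVec,
        Matrix.conjTranspose_eq_transpose_of_trivial, Matrix.vecMul_transpose]
    rw [Matrix.conjTranspose_eq_transpose_of_trivial] at heq
    rwa [heq] at h
  -- (Aᵀ x)⬝(Aᵀ x) = x ⬝ (B x)
  have hATdp : ∀ x : Fin n → ℝ, (Aᵀ *ᵥ x) ⬝ᵥ (Aᵀ *ᵥ x) = x ⬝ᵥ (B *ᵥ x) := by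
    intro x
    rw [hBdef, ← Matrix.mulVec_mulVec, Matrix.dotProduct_mulVec, Matrix.vecMul_transpose,
      dotProduct_comm]
  -- key one-step inequality : ‖Bx‖² ≤ σ² ⟨x, Bx⟩
  have hL3 : ∀ x : Fin n → ℝ, (B *ᵥ x) ⬝ᵥ (B *ᵥ x) ≤ σ ^ 2 * (x ⬝ᵥ (B *ᵥ x)) := by
    intro x
    have h1 : B *ᵥ x = A *ᵥ (Aᵀ *ᵥ x) := by rw [hBdef, Matrix.mulVec_mulVec]
    calc (B *ᵥ x) ⬝ᵥ (B *ᵥ x) = (A *ᵥ (Aᵀ *ᵥ x)) ⬝ᵥ (A *ᵥ (Aᵀ *ᵥ x)) := by rw [h1]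
    _ ≤ σ ^ 2 * ((Aᵀ *ᵥ x) ⬝ᵥ (Aᵀ *ᵥ x)) := hAquad _
    _ = σ ^ 2 * (x ⬝ᵥ (B *ᵥ x)) := by rw [hATdp]
  -- the iterates
  set w : ℕ → Fin n → ℝ := fun s => (B ^ s) *ᵥ y with hw
  have hw0 : w 0 = y := by simp [hw]
  have hwsucc : ∀ s, w (s + 1) = B *ᵥ w s := by
    intro s
    rw [hw]
    simp only
    rw [pow_succ', ← Matrix.mulVec_mulVec]
  set q : ℕ → ℝ := fun s => (w s) ⬝ᵥ (w s) with hq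
  -- unit vectors
  have hunit : ∀ x : Fin n → ℝ, vnorm x = 1 → x ⬝ᵥ x = 1 := by
    intro x hx
    have h0 : 0 ≤ ∑ i, (x i) ^ 2 := Finset.sum_nonneg fun i _ => sq_nonneg _
    rw [dp_self_eq, ← Real.sq_sqrt h0]
    rw [vnorm] at hx
    rw [hx]; norm_num
  have hyy : y ⬝ᵥ y = 1 := hunit y hy
  have huu : u₁ ⬝ᵥ u₁ = 1 := hunit u₁ hu₁
  -- inner products with u₁
  have hp : ∀ s, (w s) ⬝ᵥ u₁ = (σ ^ 2) ^ s * (y ⬝ᵥ u₁) := by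
    intro s
    induction s with
    | zero => simp [hw0]
    | succ s ih =>
      rw [hwsucc s, ← hsym, hBu, dotProduct_smul, smul_eq_mul, ih, pow_succ]
      ring
  -- correlation lower bound
  have hyusq : 1 / (n : ℝ) ≤ (y ⬝ᵥ u₁) ^ 2 := by
    have hn0 : (0:ℝ) < n := by exact_mod_cast hn
    have h1 : (1 / Real.sqrt n) ^ 2 ≤ |y ⬝ᵥ u₁| ^ 2 :=
      pow_le_pow_left₀ (by positivity) hyu 2
    rwa [div_pow, one_pow, Real.sq_sqrt (le_of_lt hn0), sq_abs] at h1
  -- lower bound on q s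
  have hqlow : ∀ s, (σ ^ 2) ^ (2 * s) / n ≤ q s := by
    intro s
    have hcs := dp_cs (w s) u₁
    rw [huu, mul_one, hp s] at hcs
    have h1 : ((σ ^ 2) ^ s) ^ 2 * (1 / (n : ℝ)) ≤ ((σ ^ 2) ^ s * (y ⬝ᵥ u₁)) ^ 2 := by
      rw [mul_pow]
      exact mul_le_mul_of_nonneg_left hyusq (by positivity)
    calc (σ ^ 2) ^ (2 * s) / n = ((σ ^ 2) ^ s) ^ 2 * (1 / (n : ℝ)) := by
          rw [← pow_mul]; ring_nf
    _ ≤ ((σ ^ 2) ^ s * (y ⬝ᵥ u₁)) ^ 2 := h1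
    _ ≤ q s := hcs
  have hqpos : ∀ s, 0 < q s := by
    intro s
    refine lt_of_lt_of_le ?_ (hqlow s)
    have hn0 : (0:ℝ) < n := by exact_mod_cast hn
    positivity
  -- ratio sequence
  set ρ : ℕ → ℝ := fun s => q (s + 1) / q s with hρ
  have hρpos : ∀ s, 0 < ρ s := fun s => div_pos (hqpos _) (hqpos _)
  -- q(s+1)² ≤ q s * q (s+2)
  have hmid : ∀ s, q (s + 1) ^ 2 ≤ q s * q (s + 2) := by
    intro s
    have h1 : q (s + 1) = (w s) ⬝ᵥ (w (s + 2)) := by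
      show (w (s+1)) ⬝ᵥ (w (s+1)) = _
      rw [hwsucc s, ← hsym, ← hwsucc, ← hwsucc]
    rw [h1]
    exact dp_cs _ _
  have hρmono : Monotone ρ := by
    apply monotone_nat_of_le_succ
    intro s
    rw [hρ]
    simp only
    rw [div_le_div_iff₀ (hqpos s) (hqpos (s + 1))]
    have := hmid s
    nlinarith [hqpos s, hqpos (s+1), hqpos (s+2)]
  -- telescoping
  have htel : ∀ k, q k = ∏ s ∈ Finset.range k, ρ s := by
    intro k
    induction k with
    | zero => simp [hq, hw0, hyy]
    | succ k ih =>
      rw [Finset.prod_range_succ, ← ih]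
      have hk : q k ≠ 0 := ne_of_gt (hqpos k)
      have hrk : ρ k = q (k + 1) / q k := rfl
      rw [hrk]
      field_simp
  have hprodle : q (t + 1) ≤ ρ t ^ (t + 1) := by
    rw [htel (t + 1)]
    calc ∏ s ∈ Finset.range (t + 1), ρ s ≤ ∏ _s ∈ Finset.range (t + 1), ρ t := by
          apply Finset.prod_le_prod
          · intro i _; exact le_of_lt (hρpos i)
          · intro i hi
            exact hρmono (Nat.le_of_lt_succ (Finset.mem_range.mp hi))
    _ = ρ t ^ (t + 1) := by rw [Finset.prod_const, Finset.card_range]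
  -- arithmetic: n (1-ε)^(2(t+1)) ≤ 1
  have hn0 : (0:ℝ) < n := by exact_mod_cast hn
  have hn1 : (1:ℝ) ≤ n := by exact_mod_cast hn
  have hkey : (n : ℝ) * (1 - ε) ^ (2 * (t + 1)) ≤ 1 := by
    have hεt : Real.log n ≤ ε * t := by
      have hlog : Real.log (n / ε) ≤ ε * t := by
        rw [one_mul, div_le_iff₀ hε0] at ht
        linarith [ht]
      have : Real.log n ≤ Real.log (n / ε) := by
        rw [Real.log_div (ne_of_gt hn0) (ne_of_gt hε0)]
        have : Real.log ε ≤ 0 := Real.log_nonpos (le_of_lt hε0) (le_of_lt hε1)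
        linarith
      linarith
    have h1 : 1 - ε ≤ Real.exp (-ε) := by
      have := Real.add_one_le_exp (-ε); linarith
    have h1' : (0:ℝ) ≤ 1 - ε := by linarith
    have h2 : (1 - ε) ^ (2 * (t + 1)) ≤ Real.exp (-ε) ^ (2 * (t + 1)) :=
      pow_le_pow_left₀ h1' h1 _
    have h3 : Real.exp (-ε) ^ (2 * (t + 1)) = Real.exp (-(ε * (2 * (t + 1) : ℕ))) := by
      rw [← Real.exp_nat_mul]; ring_nf
    have h4 : Real.exp (-(ε * (2 * (t + 1) : ℕ))) ≤ Real.exp (-Real.log n) := by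
      apply Real.exp_le_exp.mpr
      have hcast : (t : ℝ) ≤ ((2 * (t + 1) : ℕ) : ℝ) := by push_cast; linarith
      have : ε * t ≤ ε * ((2 * (t + 1) : ℕ) : ℝ) :=
        mul_le_mul_of_nonneg_left hcast (le_of_lt hε0)
      linarith
    have h5 : Real.exp (-Real.log n) = (n : ℝ)⁻¹ := by
      rw [Real.exp_neg, Real.exp_log hn0]
    calc (n : ℝ) * (1 - ε) ^ (2 * (t + 1)) ≤ (n : ℝ) * (n : ℝ)⁻¹ := by
          apply mul_le_mul_of_nonneg_left _ (le_of_lt hn0)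
          rw [← h5]
          exact le_trans h2 (le_trans (le_of_eq h3) h4)
    _ = 1 := mul_inv_cancel₀ (ne_of_gt hn0)
  -- main gap bound : ρ t ≥ (1-ε)² σ⁴
  have hρlow : (1 - ε) ^ 2 * σ ^ 4 ≤ ρ t := by
    by_contra hcon
    push_neg at hcon
    have hρnn : 0 ≤ ρ t := le_of_lt (hρpos t)
    have hstep : ρ t ^ (t + 1) < ((1 - ε) ^ 2 * σ ^ 4) ^ (t + 1) := by
      apply pow_lt_pow_left₀ hcon hρnn
      omega
    have hbig : (σ ^ 2) ^ (2 * (t + 1)) / n ≤ ρ t ^ (t + 1) :=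
      le_trans (hqlow (t + 1)) hprodle
    have hσ4 : ((1 - ε) ^ 2 * σ ^ 4) ^ (t + 1)
        = (1 - ε) ^ (2 * (t + 1)) * (σ ^ 2) ^ (2 * (t + 1)) := by
      rw [mul_pow, ← pow_mul, ← pow_mul, ← pow_mul]
      ring_nf
    have hlast : (1 - ε) ^ (2 * (t + 1)) * (σ ^ 2) ^ (2 * (t + 1))
        ≤ (σ ^ 2) ^ (2 * (t + 1)) / n := by
      rw [div_eq_mul_inv]
      have hb : (1 - ε) ^ (2 * (t + 1)) ≤ (n : ℝ)⁻¹ := by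
        rw [← one_div]
        rw [le_div_iff₀ hn0]
        linarith [hkey]
      have hσnn : (0:ℝ) ≤ (σ ^ 2) ^ (2 * (t + 1)) := by positivity
      calc (1 - ε) ^ (2 * (t + 1)) * (σ ^ 2) ^ (2 * (t + 1))
          ≤ (n : ℝ)⁻¹ * (σ ^ 2) ^ (2 * (t + 1)) := mul_le_mul_of_nonneg_right hb hσnn
      _ = (σ ^ 2) ^ (2 * (t + 1)) * (n : ℝ)⁻¹ := by ring
    have := lt_of_le_of_lt hbig hstep
    rw [hσ4] at this
    linarith [lt_of_lt_of_le this hlast]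
  have hqgap : (1 - ε) ^ 2 * σ ^ 4 * q t ≤ q (t + 1) := by
    have := hρlow
    rw [hρ] at this
    simp only at this
    rw [le_div_iff₀ (hqpos t)] at this
    linarith
  -- conclusion
  have hwt0 : w t ≠ 0 := by
    intro h
    have : q t = 0 := by rw [hq]; simp [h]
    linarith [hqpos t]
  constructor
  · exact hwt0
  · -- norm bound
    set c : ℝ := (vnorm (w t))⁻¹ with hc
    set v : Fin n → ℝ := Aᵀ *ᵥ (w t) with hv
    have hmv : Aᵀ *ᵥ (c • w t) = c • v := by rw [hv, Matrix.mulVec_smul]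
    show (1 - ε) * σ ≤ vnorm (Aᵀ *ᵥ (c • w t))
    rw [hmv]
    have hvv : v ⬝ᵥ v = (w t) ⬝ᵥ (w (t + 1)) := by
      rw [hv, hATdp, hwsucc]
    have hwBw : q (t + 1) / σ ^ 2 ≤ (w t) ⬝ᵥ (w (t + 1)) := by
      have := hL3 (w t)
      rw [← hwsucc] at this
      have hq1 : q (t + 1) ≤ σ ^ 2 * ((w t) ⬝ᵥ (w (t + 1))) := this
      rw [div_le_iff₀ (pow_pos hσ 2)]
      linarith
    have hvnq : vnorm (w t) = Real.sqrt (q t) := by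
      show Real.sqrt (∑ i, (w t i) ^ 2) = Real.sqrt (w t ⬝ᵥ w t)
      rw [dp_self_eq]
    have hcsq : c ^ 2 = (q t)⁻¹ := by
      rw [hc, hvnq, ← Real.sqrt_inv, Real.sq_sqrt (le_of_lt (inv_pos.mpr (hqpos t)))]
    rw [vnorm]
    rw [Real.le_sqrt (by nlinarith) (Finset.sum_nonneg fun i _ => sq_nonneg _)]
    have hsum : ∑ i, ((c • v) i) ^ 2 = c ^ 2 * (v ⬝ᵥ v) := by
      rw [dp_self_eq, Finset.mul_sum]
      apply Finset.sum_congr rfl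
      intro i _
      simp [mul_pow]
    rw [hsum, hcsq, hvv]
    have hσ2 : (0:ℝ) < σ ^ 2 := pow_pos hσ 2
    have hfinal : (1 - ε) ^ 2 * σ ^ 2 ≤ (q t)⁻¹ * (q (t + 1) / σ ^ 2) := by
      have heq : (q t)⁻¹ * (q (t + 1) / σ ^ 2) = q (t + 1) / (q t * σ ^ 2) := by
        field_simp
      rw [heq, le_div_iff₀ (mul_pos (hqpos t) hσ2)]
      linear_combination hqgap
    have hmono : (q t)⁻¹ * (q (t + 1) / σ ^ 2) ≤ (q t)⁻¹ * ((w t) ⬝ᵥ (w (t + 1))) := by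
      apply mul_le_mul_of_nonneg_left hwBw
      exact le_of_lt (inv_pos.mpr (hqpos t))
    calc ((1 - ε) * σ) ^ 2 = (1 - ε) ^ 2 * σ ^ 2 := by ring
    _ ≤ (q t)⁻¹ * (q (t + 1) / σ ^ 2) := hfinal
    _ ≤ (q t)⁻¹ * ((w t) ⬝ᵥ (w (t + 1))) := hmono
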